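/- If the atom dependency graph of a defeasible theory D is acyclic, then D is decisive: for every literal p occurring in D, either D ⊢ +∂ p or D ⊢ −∂ p. -/
import Mathlib


namespace DL

abbrev Atom := ℕ

/-- A literal: an atom with a polarity. -/
structure Lit where
  atom : Atom
  pos : Bool
deriving DecidableEq

/-- The complement `∼p` of a literal. -/
def Lit.neg (l : Lit) : Lit := ⟨l.atom, !l.pos⟩

/-- A defeasible rule: a finite set of antecedent literals and a head literal. -/
structure Rule where
  ante : Finset Lit
  head : Lit
deriving DecidableEq

/-- A defeasible theory: facts, defeasible rules, and a superiority relation. -/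
structure DTheory where
  facts : Finset Lit
  rules : Finset Rule
  sup : Rule → Rule → Prop

/-- A superiority relation is acyclic iff its transitive closure is irreflexive. -/
def Acyclic (sup : Rule → Rule → Prop) : Prop :=
  Irreflexive (Relation.TransGen sup)

def DTheory.FactsConsistent (D : DTheory) : Prop :=
  ∀ l ∈ D.facts, l.neg ∉ D.facts

/-- Well-formedness of a defeasible theory: consistent facts, acyclic superiority
relation defined on the rules of the theory. -/
def DTheory.WellFormed (D : DTheory) : Prop :=
  D.FactsConsistent ∧ Acyclic D.sup ∧ ∀ r s, D.sup r s → r ∈ D.rules ∧ s ∈ D.rules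

/-- Proof tags: Δ, Σ, σ, ω, φ, ∂. -/
inductive Tag | delta | Sig | sgm | omg | phi | prt
deriving DecidableEq

/-- A tagged literal: a tag, a sign (`true` = `+`, `false` = `−`), and a literal. -/
abbrev TLit := Tag × Bool × Lit

/-- The proof conditions of Defeasible Logic (defeasible rules only), relative to
the preceding part `P` of a proof sequence. -/
def Cond (D : DTheory) (P : List TLit) : Tag → Bool → Lit → Prop
  | .delta, true, q => q ∈ D.facts
  | .delta, false, q => q ∉ D.facts
  | .Sig, true, q =>
      (Tag.delta, true, q) ∈ P ∨
      ∃ r ∈ D.rules, r.head = q ∧ ∀ a ∈ r.ante, (Tag.Sig, true, a) ∈ P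
  | .Sig, false, q =>
      (Tag.delta, true, q) ∉ P ∧
      ∀ r ∈ D.rules, r.head = q → ∃ a ∈ r.ante, (Tag.Sig, false, a) ∈ P
  | .sgm, true, q =>
      (Tag.delta, true, q) ∈ P ∨
      ∃ r ∈ D.rules, r.head = q ∧ (∀ a ∈ r.ante, (Tag.sgm, true, a) ∈ P) ∧
        ∀ s ∈ D.rules, s.head = q.neg →
          (∃ a ∈ s.ante, (Tag.prt, false, a) ∈ P) ∨ ¬ D.sup s r
  | .sgm, false, q =>
      (Tag.delta, true, q) ∉ P ∧
      ∀ r ∈ D.rules, r.head = q →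
        (∃ a ∈ r.ante, (Tag.sgm, false, a) ∈ P) ∨
        ∃ s ∈ D.rules, s.head = q.neg ∧ (∀ a ∈ s.ante, (Tag.prt, true, a) ∈ P) ∧ D.sup s r
  | .omg, true, q =>
      (Tag.delta, true, q) ∈ P ∨
      ∃ r ∈ D.rules, r.head = q ∧ ∀ a ∈ r.ante, (Tag.prt, true, a) ∈ P
  | .omg, false, q =>
      (Tag.delta, true, q) ∉ P ∧
      ∀ r ∈ D.rules, r.head = q → ∃ a ∈ r.ante, (Tag.prt, false, a) ∈ P
  | .phi, true, q =>
      (Tag.delta, true, q) ∈ P ∨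
      ∃ r ∈ D.rules, r.head = q ∧ (∀ a ∈ r.ante, (Tag.phi, true, a) ∈ P) ∧
        ∀ s ∈ D.rules, s.head = q.neg → ∃ a ∈ s.ante, (Tag.Sig, false, a) ∈ P
  | .phi, false, q =>
      (Tag.delta, true, q) ∉ P ∧
      ∀ r ∈ D.rules, r.head = q →
        (∃ a ∈ r.ante, (Tag.phi, false, a) ∈ P) ∨
        ∃ s ∈ D.rules, s.head = q.neg ∧ ∀ a ∈ s.ante, (Tag.Sig, true, a) ∈ P
  | .prt, true, q =>
      (Tag.delta, true, q) ∈ P ∨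
      ((Tag.delta, false, q.neg) ∈ P ∧
       (∃ r ∈ D.rules, r.head = q ∧ ∀ a ∈ r.ante, (Tag.prt, true, a) ∈ P) ∧
       ∀ s ∈ D.rules, s.head = q.neg →
         (∃ a ∈ s.ante, (Tag.prt, false, a) ∈ P) ∨
         ∃ t ∈ D.rules, t.head = q ∧ (∀ a ∈ t.ante, (Tag.prt, true, a) ∈ P) ∧ D.sup t s)
  | .prt, false, q =>
      (Tag.delta, true, q) ∉ P ∧
      ((Tag.delta, true, q.neg) ∈ P ∨
       (∀ r ∈ D.rules, r.head = q → ∃ a ∈ r.ante, (Tag.prt, false, a) ∈ P) ∨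
       ∃ s ∈ D.rules, s.head = q.neg ∧ (∀ a ∈ s.ante, (Tag.prt, true, a) ∈ P) ∧
         ∀ t ∈ D.rules, t.head = q →
           (∃ a ∈ t.ante, (Tag.prt, false, a) ∈ P) ∨ ¬ D.sup t s)

/-- A proof (derivation) is a finite sequence of tagged literals each of which
satisfies the proof condition relative to the preceding part of the sequence. -/
inductive ValidProof (D : DTheory) : List TLit → Prop
  | nil : ValidProof D []
  | snoc {P : List TLit} {t : Tag} {s : Bool} {q : Lit} :
      ValidProof D P → Cond D P t s q → ValidProof D (P ++ [(t, s, q)])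

/-- `D ⊢ ±# q`: some valid proof in `D` contains the tagged literal. -/
def Proves (D : DTheory) (t : Tag) (s : Bool) (q : Lit) : Prop :=
  ∃ P, ValidProof D P ∧ (t, s, q) ∈ P

/-- A theory is consistent iff it never defeasibly proves both a literal and
its complement. -/
def Consistent (D : DTheory) : Prop :=
  ∀ p : Lit, ¬ (Proves D .prt true p ∧ Proves D .prt true p.neg)

/-- `a` depends on `b` iff `b = a`, or for every rule for `a` either `b` is an
antecedent or some antecedent depends on `b` (least such relation,
impredicatively encoded). -/
def DependsOn (D : DTheory) (a b : Lit) : Prop :=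
  ∀ S : Lit → Lit → Prop,
    (∀ x, S x x) →
    (∀ x y, (∀ r ∈ D.rules, r.head = x → y ∈ r.ante ∨ ∃ c ∈ r.ante, S c y) → S x y) →
    S a b

/-- `p` is ∂-unreachable iff every rule for `p` either has two antecedents
depending on complementary literals or has a ∂-unreachable antecedent
(least such predicate, impredicatively encoded). -/
def Unreachable (D : DTheory) (p : Lit) : Prop :=
  ∀ S : Lit → Prop,
    (∀ x, (∀ r ∈ D.rules, r.head = x →
        (∃ l : Lit, ∃ a ∈ r.ante, ∃ b ∈ r.ante, DependsOn D a l ∧ DependsOn D b l.neg) ∨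
        ∃ d ∈ r.ante, S d) → S x) →
    S p

/-- The literal `p` appears in the theory `D` (its atom occurs in `D`). -/
def AppearsIn (p : Lit) (D : DTheory) : Prop :=
  (∃ l ∈ D.facts, l.atom = p.atom) ∨
  ∃ r ∈ D.rules, r.head.atom = p.atom ∨ ∃ l ∈ r.ante, l.atom = p.atom

/-- Positive part of the belief set of a defeasible theory. -/
def BSplus (D : DTheory) : Set Lit := {p | AppearsIn p D ∧ Proves D .prt true p}

/-- Negative part of the belief set of a defeasible theory. -/
def BSminus (D : DTheory) : Set Lit := {p | AppearsIn p D ∧ Proves D .prt false p}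

/-- The belief set of a defeasible theory. -/
def BS (D : DTheory) : Set Lit := BSplus D ∪ BSminus D

/-- Edge of the atom dependency graph: from atom `a` to atom `b` whenever some
rule has head with atom `b` and an antecedent literal with atom `a`. -/
def AtomEdge (D : DTheory) (a b : Atom) : Prop :=
  ∃ r ∈ D.rules, r.head.atom = b ∧ ∃ l ∈ r.ante, l.atom = a

/-- A theory is decisive iff every literal appearing in it is defeasibly
provable or defeasibly refuted. -/
def Decisive (D : DTheory) : Prop :=
  ∀ p : Lit, AppearsIn p D → Proves D .prt true p ∨ Proves D .prt false p

end DL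
namespace DL

open Classical

/-- Any `+Δ` line in a valid proof is a fact. -/
lemma deltaTrue_mem_facts {D : DTheory} {P : List TLit} (h : ValidProof D P)
    {q : Lit} (hq : (Tag.delta, true, q) ∈ P) : q ∈ D.facts := by
  induction h with
  | nil => simp at hq
  | @snoc P t s q' _ hc ih =>
    rcases List.mem_append.1 hq with h1 | h2
    · exact ih h1
    · simp at h2
      obtain ⟨ht, hs, hq'⟩ := h2
      subst ht; subst hs; subst hq'
      exact hc

/-- Lines allowed in "strict" proofs. -/
def LineOK (D : DTheory) (x : TLit) : Prop :=
  (x.1 = Tag.delta ∨ x.1 = Tag.prt) ∧ (x.2.1 = false → x.1 = Tag.prt → x.2.2 ∉ D.facts)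

def Strict (D : DTheory) (P : List TLit) : Prop :=
  ValidProof D P ∧ ∀ x ∈ P, LineOK D x

lemma cond_mono_prt_true {D : DTheory} {P P' : List TLit} {q : Lit}
    (hc : Cond D P .prt true q) (hsub : ∀ x ∈ P, x ∈ P') :
    Cond D P' .prt true q := by
  rcases hc with h | ⟨h1, ⟨r, hr, hh, ha⟩, h3⟩
  · exact Or.inl (hsub _ h)
  · refine Or.inr ⟨hsub _ h1, ⟨r, hr, hh, fun a ha' => hsub _ (ha a ha')⟩, fun s hs hh' => ?_⟩
    rcases h3 s hs hh' with ⟨a, ha', hm⟩ | ⟨t, ht, hth, hta, hsup⟩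
    · exact Or.inl ⟨a, ha', hsub _ hm⟩
    · exact Or.inr ⟨t, ht, hth, fun a ha'' => hsub _ (hta a ha''), hsup⟩

lemma cond_mono_prt_false {D : DTheory} {P P' : List TLit} {q : Lit}
    (hc : Cond D P .prt false q) (hsub : ∀ x ∈ P, x ∈ P')
    (hneg : (Tag.delta, true, q) ∉ P') : Cond D P' .prt false q := by
  obtain ⟨-, h⟩ := hc
  refine ⟨hneg, ?_⟩
  rcases h with h | h | ⟨s, hs, hh, ha, h3⟩
  · exact Or.inl (hsub _ h)
  · refine Or.inr (Or.inl fun r hr hh => ?_)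
    obtain ⟨a, ha, hm⟩ := h r hr hh
    exact ⟨a, ha, hsub _ hm⟩
  · refine Or.inr (Or.inr ⟨s, hs, hh, fun a ha' => hsub _ (ha a ha'), fun t ht hth => ?_⟩)
    rcases h3 t ht hth with ⟨a, ha', hm⟩ | hns
    · exact Or.inl ⟨a, ha', hsub _ hm⟩
    · exact Or.inr hns

lemma valid_append {D : DTheory} {P Q : List TLit} (hP : ValidProof D P)
    (hQ : ValidProof D Q) (hl : ∀ x ∈ Q, LineOK D x) :
    ValidProof D (P ++ Q) := by
  induction hQ with
  | nil => simpa using hP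
  | @snoc Q' t s q hQ' hc ih =>
    rw [← List.append_assoc]
    have hvalid : ValidProof D (P ++ Q') :=
      ih (fun x hx => hl x (by simp [hx]))
    refine ValidProof.snoc hvalid ?_
    have hline := hl (t, s, q) (by simp)
    have hsub : ∀ x ∈ Q', x ∈ P ++ Q' := fun x hx => List.mem_append.2 (Or.inr hx)
    rcases hline.1 with ht | ht <;> subst ht
    · cases s
      · exact hc
      · exact hc
    · cases s
      · have hq : q ∉ D.facts := hline.2 rfl rfl
        exact cond_mono_prt_false hc hsub
          (fun hmem => hq (deltaTrue_mem_facts hvalid hmem))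
      · exact cond_mono_prt_true hc hsub

lemma strict_append {D : DTheory} {P Q : List TLit} (hP : Strict D P) (hQ : Strict D Q) :
    Strict D (P ++ Q) :=
  ⟨valid_append hP.1 hQ.1 hQ.2, fun x hx => by
    rcases List.mem_append.1 hx with h | h
    · exact hP.2 x h
    · exact hQ.2 x h⟩

lemma strict_snoc {D : DTheory} {P : List TLit} {t s q} (hP : Strict D P)
    (hc : Cond D P t s q) (hok : LineOK D (t, s, q)) :
    Strict D (P ++ [(t, s, q)]) :=
  ⟨ValidProof.snoc hP.1 hc, fun x hx => by
    rcases List.mem_append.1 hx with h | h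
    · exact hP.2 x h
    · simp at h; subst h; exact hok⟩

def SProves (D : DTheory) (x : TLit) : Prop := ∃ P, Strict D P ∧ x ∈ P

def Decided (D : DTheory) (p : Lit) : Prop :=
  SProves D (Tag.prt, true, p) ∨ SProves D (Tag.prt, false, p)

lemma exists_superproof {D : DTheory} (A : Finset TLit) (h : ∀ x ∈ A, SProves D x) :
    ∃ P, Strict D P ∧ ∀ x ∈ A, x ∈ P := by
  classical
  induction A using Finset.induction with
  | empty => exact ⟨[], ⟨ValidProof.nil, by simp⟩, by simp⟩
  | @insert x A' hx ih =>
    obtain ⟨P, hP, hPm⟩ := ih (fun y hy => h y (Finset.mem_insert_of_mem hy))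
    obtain ⟨Q, hQ, hQm⟩ := h x (Finset.mem_insert_self _ _)
    refine ⟨P ++ Q, strict_append hP hQ, fun y hy => ?_⟩
    rcases Finset.mem_insert.1 hy with rfl | hy
    · exact List.mem_append.2 (Or.inr hQm)
    · exact List.mem_append.2 (Or.inl (hPm y hy))

lemma atomEdge_wf (D : DTheory) (hacyc : Irreflexive (Relation.TransGen (AtomEdge D))) :
    WellFounded (AtomEdge D) := by
  classical
  set H : Finset Atom := D.rules.biUnion (fun r => insert r.head.atom (r.ante.image Lit.atom))
    with hH
  have hmem : ∀ a b, AtomEdge D a b → a ∈ H ∧ b ∈ H := by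
    rintro a b ⟨r, hr, hhd, l, hl, hla⟩
    constructor
    · exact Finset.mem_biUnion.2
        ⟨r, hr, Finset.mem_insert_of_mem (Finset.mem_image.2 ⟨l, hl, hla⟩)⟩
    · exact Finset.mem_biUnion.2 ⟨r, hr, Finset.mem_insert.2 (Or.inl hhd.symm)⟩
  set f : Atom → ℕ := fun b => (H.filter (fun x => Relation.TransGen (AtomEdge D) x b)).card
    with hf
  have hlt : ∀ a b, AtomEdge D a b → f a < f b := by
    intro a b hab
    apply Finset.card_lt_card
    have hsub : H.filter (fun x => Relation.TransGen (AtomEdge D) x a) ⊆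
        H.filter (fun x => Relation.TransGen (AtomEdge D) x b) := by
      intro x hx
      rw [Finset.mem_filter] at hx ⊢
      exact ⟨hx.1, hx.2.tail hab⟩
    rw [Finset.ssubset_iff_of_subset hsub]
    refine ⟨a, Finset.mem_filter.2 ⟨(hmem a b hab).1, Relation.TransGen.single hab⟩, ?_⟩
    intro hmem'
    exact hacyc a (Finset.mem_filter.1 hmem').2
  exact Subrelation.wf (fun {a b} h => hlt a b h) (InvImage.wf f (Nat.lt_wfRel.wf))

lemma key (D : DTheory) (p : Lit) (hf : p ∉ D.facts)
    (ih : ∀ q : Lit, AtomEdge D q.atom p.atom → Decided D q) :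
    Decided D p := by
  classical
  -- relevant rules and antecedents
  set Rel : Finset Rule := D.rules.filter (fun r => r.head = p ∨ r.head = p.neg) with hRel
  set Ants : Finset Lit := Rel.biUnion Rule.ante with hAnts
  have hdec : ∀ a ∈ Ants, Decided D a := by
    intro a ha
    obtain ⟨r, hr, har⟩ := Finset.mem_biUnion.1 ha
    have hr' := Finset.mem_filter.1 hr
    refine ih a ⟨r, hr'.1, ?_, a, har, rfl⟩
    rcases hr'.2 with h | h <;> rw [h] <;> rfl
  set A : Finset TLit :=
    ((Ants.image fun a => (Tag.prt, true, a)) ∪ (Ants.image fun a => (Tag.prt, false, a))).filter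
      (fun x => SProves D x) with hA
  obtain ⟨P, hP, hPA⟩ := exists_superproof A (fun x hx => (Finset.mem_filter.1 hx).2)
  have hmemP : ∀ a ∈ Ants, ∀ s : Bool, SProves D (Tag.prt, s, a) → (Tag.prt, s, a) ∈ P := by
    intro a ha s hs
    refine hPA _ (Finset.mem_filter.2 ⟨?_, hs⟩)
    cases s
    · exact Finset.mem_union_right _ (Finset.mem_image.2 ⟨a, ha, rfl⟩)
    · exact Finset.mem_union_left _ (Finset.mem_image.2 ⟨a, ha, rfl⟩)
  have hdecP : ∀ a ∈ Ants, (Tag.prt, true, a) ∈ P ∨ (Tag.prt, false, a) ∈ P := by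
    intro a ha
    rcases hdec a ha with h | h
    · exact Or.inl (hmemP a ha true h)
    · exact Or.inr (hmemP a ha false h)
  have hAppOr : ∀ r ∈ Rel,
      (∀ a ∈ r.ante, (Tag.prt, true, a) ∈ P) ∨ ∃ a ∈ r.ante, (Tag.prt, false, a) ∈ P := by
    intro r hr
    by_cases h : ∀ a ∈ r.ante, (Tag.prt, true, a) ∈ P
    · exact Or.inl h
    · push_neg at h
      obtain ⟨a, ha, hna⟩ := h
      have haA : a ∈ Ants := Finset.mem_biUnion.2 ⟨r, hr, ha⟩
      rcases hdecP a haA with h' | h'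
      · exact absurd h' hna
      · exact Or.inr ⟨a, ha, h'⟩
  have hnd : ∀ {P' : List TLit}, ValidProof D P' → (Tag.delta, true, p) ∉ P' :=
    fun hv hmem => hf (deltaTrue_mem_facts hv hmem)
  by_cases hfn : p.neg ∈ D.facts
  · -- −∂ p via +Δ ∼p
    right
    have h1 : Strict D (P ++ [(Tag.delta, true, p.neg)]) :=
      strict_snoc hP (show Cond D P .delta true p.neg from hfn)
        ⟨Or.inl rfl, by simp⟩
    have h2 : Strict D ((P ++ [(Tag.delta, true, p.neg)]) ++ [(Tag.prt, false, p)]) := by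
      refine strict_snoc h1 ⟨hnd h1.1, Or.inl (by simp)⟩ ⟨Or.inr rfl, fun _ _ => hf⟩
    exact ⟨_, h2, by simp⟩
  · by_cases hall : ∀ r ∈ D.rules, r.head = p → ∃ a ∈ r.ante, (Tag.prt, false, a) ∈ P
    · -- all rules for p discarded
      right
      have h2 : Strict D (P ++ [(Tag.prt, false, p)]) :=
        strict_snoc hP ⟨hnd hP.1, Or.inr (Or.inl hall)⟩ ⟨Or.inr rfl, fun _ _ => hf⟩
      exact ⟨_, h2, by simp⟩
    · push_neg at hall
      obtain ⟨r, hr, hrh, hrd⟩ := hall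
      have hrRel : r ∈ Rel := Finset.mem_filter.2 ⟨hr, Or.inl hrh⟩
      have hrApp : ∀ a ∈ r.ante, (Tag.prt, true, a) ∈ P := by
        rcases hAppOr r hrRel with h | ⟨a, ha, hm⟩
        · exact h
        · exact absurd hm (hrd a ha)
      by_cases hctr : ∀ s ∈ D.rules, s.head = p.neg →
          (∃ a ∈ s.ante, (Tag.prt, false, a) ∈ P) ∨
          ∃ t ∈ D.rules, t.head = p ∧ (∀ a ∈ t.ante, (Tag.prt, true, a) ∈ P) ∧ D.sup t s
      · -- +∂ p
        left
        have h1 : Strict D (P ++ [(Tag.delta, false, p.neg)]) :=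
          strict_snoc hP (show Cond D P .delta false p.neg from hfn)
            ⟨Or.inl rfl, fun _ h => by cases h⟩
        set P₁ := P ++ [(Tag.delta, false, p.neg)] with hP₁
        have hsub : ∀ x ∈ P, x ∈ P₁ := fun x hx => List.mem_append.2 (Or.inl hx)
        have hcond : Cond D P₁ .prt true p := by
          refine Or.inr ⟨by simp [hP₁], ⟨r, hr, hrh, fun a ha => hsub _ (hrApp a ha)⟩, ?_⟩
          intro s hs hsh
          rcases hctr s hs hsh with ⟨a, ha, hm⟩ | ⟨t, ht, hth, hta, hsup⟩
          · exact Or.inl ⟨a, ha, hsub _ hm⟩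
          · exact Or.inr ⟨t, ht, hth, fun a ha => hsub _ (hta a ha), hsup⟩
        have h2 : Strict D (P₁ ++ [(Tag.prt, true, p)]) :=
          strict_snoc h1 hcond ⟨Or.inr rfl, by simp⟩
        exact ⟨_, h2, by simp⟩
      · -- −∂ p via an undefeated attacking rule
        right
        push_neg at hctr
        obtain ⟨s, hs, hsh, hsnd, hsnt⟩ := hctr
        have hsRel : s ∈ Rel := Finset.mem_filter.2 ⟨hs, Or.inr hsh⟩
        have hsApp : ∀ a ∈ s.ante, (Tag.prt, true, a) ∈ P := by
          rcases hAppOr s hsRel with h | ⟨a, ha, hm⟩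
          · exact h
          · exact absurd hm (hsnd a ha)
        have hcond : Cond D P .prt false p := by
          refine ⟨hnd hP.1, Or.inr (Or.inr ⟨s, hs, hsh, hsApp, ?_⟩)⟩
          intro t ht hth
          have htRel : t ∈ Rel := Finset.mem_filter.2 ⟨ht, Or.inl hth⟩
          rcases hAppOr t htRel with h | ⟨a, ha, hm⟩
          · refine Or.inr fun hsup => ?_
            exact (hsnt t ht hth h) hsup
          · exact Or.inl ⟨a, ha, hm⟩
        have h2 : Strict D (P ++ [(Tag.prt, false, p)]) :=
          strict_snoc hP hcond ⟨Or.inr rfl, fun _ _ => hf⟩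
        exact ⟨_, h2, by simp⟩

lemma decided_of_fact (D : DTheory) (p : Lit) (hf : p ∈ D.facts) : Decided D p := by
  left
  have h1 : Strict D ([] ++ [(Tag.delta, true, p)]) :=
    strict_snoc ⟨ValidProof.nil, by simp⟩ (show Cond D [] .delta true p from hf)
      ⟨Or.inl rfl, by simp⟩
  have h2 : Strict D (([] ++ [(Tag.delta, true, p)]) ++ [(Tag.prt, true, p)]) :=
    strict_snoc h1 (show Cond D _ .prt true p from Or.inl (by simp)) ⟨Or.inr rfl, by simp⟩
  exact ⟨_, h2, by simp⟩

end DL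

open DL in
/-- If the atom dependency graph of a defeasible theory is acyclic, then the
theory is decisive. -/
theorem stmt5 (D : DTheory) (hwf : D.WellFormed)
    (hacyc : Irreflexive (Relation.TransGen (AtomEdge D))) :
    Decisive D := by
  classical
  have hwfE := atomEdge_wf D hacyc
  have main : ∀ A : Atom, ∀ p : Lit, p.atom = A → Decided D p := by
    intro A
    induction A using WellFounded.induction hwfE with
    | _ A ihA =>
      intro p hpA
      by_cases hf : p ∈ D.facts
      · exact decided_of_fact D p hf
      · refine key D p hf ?_
        intro q hq
        rw [hpA] at hq
        exact ihA q.atom hq q rfl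
  intro p _
  rcases main p.atom p rfl with ⟨P, hP, hm⟩ | ⟨P, hP, hm⟩
  · exact Or.inl ⟨P, hP.1, hm⟩
  · exact Or.inr ⟨P, hP.1, hm⟩
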